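/- For ν-almost every 𝚒 ∈ {1,2}^ℕ (ν the Bernoulli(1/2,1/2) measure), the maximal run length of 2's satisfies lim_{n→∞} Z_n(𝚒)/log₂ n = 1, where Z_n(𝚒) is the length of the longest block of consecutive 2's in the first n symbols of 𝚒. -/

import Mathlib

open Set MeasureTheory Filter
open scoped ENNReal Topology

/-- `maxRun i n` is the length `Z_n(i)` of the longest block of consecutive symbols
`2` (coded by `1 : Fin 2`) among the first `n` symbols of `i`. -/
noncomputable def maxRun (i : ℕ → Fin 2) (n : ℕ) : ℕ :=
  sSup {k : ℕ | ∃ j : ℕ, j + k ≤ n ∧ ∀ m < k, i (j + m) = 1}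

lemma runSet_bdd (i : ℕ → Fin 2) (n : ℕ) :
    BddAbove {k : ℕ | ∃ j : ℕ, j + k ≤ n ∧ ∀ m < k, i (j + m) = 1} :=
  ⟨n, fun k hk => by obtain ⟨j, hj, -⟩ := hk; omega⟩

lemma runSet_nonempty (i : ℕ → Fin 2) (n : ℕ) :
    {k : ℕ | ∃ j : ℕ, j + k ≤ n ∧ ∀ m < k, i (j + m) = 1}.Nonempty :=
  ⟨0, 0, by omega, fun m hm => by omega⟩

lemma le_maxRun {i : ℕ → Fin 2} {n k : ℕ} (j : ℕ) (h1 : j + k ≤ n)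
    (h2 : ∀ m < k, i (j + m) = 1) : k ≤ maxRun i n :=
  le_csSup (runSet_bdd i n) ⟨j, h1, h2⟩

lemma maxRun_spec (i : ℕ → Fin 2) (n : ℕ) :
    ∃ j, j + maxRun i n ≤ n ∧ ∀ m < maxRun i n, i (j + m) = 1 :=
  Nat.sSup_mem (runSet_nonempty i n) (runSet_bdd i n)

lemma maxRun_mono (i : ℕ → Fin 2) {n n' : ℕ} (h : n ≤ n') :
    maxRun i n ≤ maxRun i n' := by
  obtain ⟨j, hj, hr⟩ := maxRun_spec i n
  exact le_maxRun j (by omega) hr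

lemma maxRun_lt_iff {i : ℕ → Fin 2} {n k : ℕ} :
    maxRun i n < k ↔ ∀ j, j + k ≤ n → ∃ m, m < k ∧ i (j + m) ≠ 1 := by
  constructor
  · intro h j hj
    by_contra hc
    push_neg at hc
    exact absurd (le_maxRun j hj fun m hm => hc m hm) (by omega)
  · intro h
    by_contra hc
    push_neg at hc
    obtain ⟨j, hj, hr⟩ := maxRun_spec i n
    obtain ⟨m, hm, hne⟩ := h j (by omega)
    exact hne (hr m (by omega))


lemma blk_lt {B k b m : ℕ} (hb : b < B) (hm : m < k) : b * k + m < B * k :=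
  lt_of_lt_of_le (Nat.add_lt_add_left hm _)
    (by rw [← Nat.succ_mul]; exact Nat.mul_le_mul_right k hb)

lemma card_ne_one (k : ℕ) :
    Nat.card {v : Fin k → Fin 2 // ∃ m, v m ≠ 1} = 2 ^ k - 1 := by
  rw [Nat.card_eq_fintype_card,
    Fintype.card_congr (Equiv.subtypeEquivRight (q := fun v : Fin k → Fin 2 =>
      ¬ (v = fun _ => 1)) (fun v => by simp [funext_iff]))]
  rw [Fintype.card_subtype_compl]
  simp [Fintype.card_fun]

lemma card_run (j k : ℕ) :
    Nat.card {w : Fin (j + k) → Fin 2 //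
      ∀ m (h : m < k), w ⟨j + m, by omega⟩ = 1} = 2 ^ j := by
  have e : {w : Fin (j + k) → Fin 2 // ∀ m (h : m < k), w ⟨j + m, by omega⟩ = 1}
      ≃ (Fin j → Fin 2) :=
  { toFun := fun w t => w.1 ⟨t, by omega⟩
    invFun := fun g => ⟨fun t => if h : (t : ℕ) < j then g ⟨t, h⟩ else 1,
      fun m h => by simp⟩
    left_inv := fun w => by
      apply Subtype.ext
      funext t
      by_cases h : (t : ℕ) < j
      · simp [h]
      · simp only [h, dif_neg, not_false_iff]
        have ht : (t : ℕ) = j + ((t : ℕ) - j) := by omega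
        have := w.2 ((t : ℕ) - j) (by have := t.isLt; omega)
        rw [show t = (⟨j + ((t:ℕ) - j), by have := t.isLt; omega⟩ : Fin (j+k)) from
          Fin.ext (by simp; omega)]
        exact this.symm
    right_inv := fun g => by
      funext t
      simp [t.isLt] }
  rw [Nat.card_congr e]
  simp [Nat.card_eq_fintype_card, Fintype.card_fun]

lemma card_blocks (B k : ℕ) (hk : 0 < k) :
    Nat.card {w : Fin (B * k) → Fin 2 //
      ∀ b (hb : b < B), ∃ m, ∃ hm : m < k, w ⟨b * k + m, blk_lt hb hm⟩ ≠ 1}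
      = (2 ^ k - 1) ^ B := by
  have hdiv : ∀ b m : ℕ, m < k → (b * k + m) / k = b := by
    intro b m hm
    rw [Nat.add_comm, Nat.add_mul_div_right _ _ hk, Nat.div_eq_of_lt hm, Nat.zero_add]
  have hmod : ∀ b m : ℕ, m < k → (b * k + m) % k = m := by
    intro b m hm
    rw [Nat.add_comm, Nat.add_mul_mod_self_right, Nat.mod_eq_of_lt hm]
  have e : {w : Fin (B * k) → Fin 2 //
      ∀ b (hb : b < B), ∃ m, ∃ hm : m < k, w ⟨b * k + m, blk_lt hb hm⟩ ≠ 1}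
      ≃ (Fin B → {v : Fin k → Fin 2 // ∃ m, v m ≠ 1}) :=
  { toFun := fun w b =>
      ⟨fun m => w.1 ⟨(b : ℕ) * k + m, blk_lt b.isLt m.isLt⟩, by
        obtain ⟨m, hm, hne⟩ := w.2 b b.isLt
        exact ⟨⟨m, hm⟩, hne⟩⟩
    invFun := fun g =>
      ⟨fun t => (g ⟨(t : ℕ) / k, (Nat.div_lt_iff_lt_mul hk).2 t.isLt⟩).1
          ⟨(t : ℕ) % k, Nat.mod_lt _ hk⟩, by
        intro b hb
        obtain ⟨m, hne⟩ := (g ⟨b, hb⟩).2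
        refine ⟨m, m.isLt, ?_⟩
        show (g ⟨(b * k + (m:ℕ)) / k, _⟩).1 ⟨(b * k + (m:ℕ)) % k, _⟩ ≠ 1
        rw [show ((⟨(b * k + (m:ℕ)) / k,
              (Nat.div_lt_iff_lt_mul hk).2 (blk_lt hb m.isLt)⟩ : Fin B)) = ⟨b, hb⟩ from
            Fin.ext (by simp [hdiv b m m.isLt]),
          show ((⟨(b * k + (m:ℕ)) % k, Nat.mod_lt _ hk⟩ : Fin k)) = m from
            Fin.ext (by simp [hmod b m m.isLt])]
        exact hne⟩
    left_inv := fun w => by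
      apply Subtype.ext
      funext t
      show w.1 _ = w.1 t
      congr 1
      exact Fin.ext (by simp [Nat.div_add_mod'])
    right_inv := fun g => by
      funext b
      apply Subtype.ext
      funext m
      show (g ⟨((b:ℕ) * k + (m:ℕ)) / k, _⟩).1 ⟨((b:ℕ) * k + (m:ℕ)) % k, _⟩ = (g b).1 m
      rw [show ((⟨((b:ℕ) * k + (m:ℕ)) / k,
            (Nat.div_lt_iff_lt_mul hk).2 (blk_lt b.isLt m.isLt)⟩ : Fin B)) = b from
          Fin.ext (by simp [hdiv b m m.isLt]),
        show ((⟨((b:ℕ) * k + (m:ℕ)) % k, Nat.mod_lt _ hk⟩ : Fin k)) = m from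
          Fin.ext (by simp [hmod b m m.isLt])] }
  rw [Nat.card_congr e]
  rw [Nat.card_pi]
  rw [Finset.prod_const, card_ne_one]
  simp


variable {ν : Measure (ℕ → Fin 2)}

lemma meas_cyl
    (hcyl : ∀ (n : ℕ) (w : Fin n → Fin 2),
      ν {i | ∀ k : Fin n, i k = w k} = ((2:ℝ≥0∞)⁻¹) ^ n)
    (n : ℕ) (P : (Fin n → Fin 2) → Prop) [DecidablePred P] :
    ν {i | P (fun t => i t)} = (Nat.card {w // P w} : ℝ≥0∞) * 2⁻¹ ^ n := by
  have hset : {i : ℕ → Fin 2 | P (fun t => i t)} =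
      ⋃ w ∈ Finset.filter P Finset.univ, {i : ℕ → Fin 2 | ∀ t : Fin n, i t = w t} := by
    ext i
    simp only [mem_setOf_eq, Finset.mem_coe, Finset.mem_filter, Finset.mem_univ,
      true_and, mem_iUnion, exists_prop]
    constructor
    · intro h
      exact ⟨fun t => i t, h, fun t => rfl⟩
    · rintro ⟨w, hw, he⟩
      have : (fun t : Fin n => i t) = w := funext he
      rwa [this]
  rw [hset, measure_biUnion_finset]
  · rw [Finset.sum_congr rfl (fun w _ => hcyl n w), Finset.sum_const, nsmul_eq_mul]
    congr 2
    rw [Nat.card_eq_fintype_card, Fintype.card_subtype]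
  · intro w hw w' hw' hne
    rw [Function.onFun]
    apply Set.disjoint_left.mpr
    intro i hi hi'
    exact hne (funext fun t => (hi t).symm.trans (hi' t))
  · intro w hw
    have : {i : ℕ → Fin 2 | ∀ t : Fin n, i t = w t}
        = ⋂ t : Fin n, (fun i : ℕ → Fin 2 => i t) ⁻¹' {w t} := by
      ext i; simp
    rw [this]
    exact MeasurableSet.iInter fun t => (measurable_pi_apply _) (measurableSet_singleton _)

lemma pow_mul_inv_pow {a b : ℕ} (h : a ≤ b) :
    (2:ℝ≥0∞) ^ a * 2⁻¹ ^ b = 2⁻¹ ^ (b - a) := by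
  have h2 : (2:ℝ≥0∞) ^ a * 2⁻¹ ^ a = 1 := by
    rw [← mul_pow, ENNReal.mul_inv_cancel two_ne_zero ENNReal.ofNat_ne_top, one_pow]
  obtain ⟨c, rfl⟩ : ∃ c, b = a + c := ⟨b - a, by omega⟩
  rw [pow_add, ← mul_assoc, h2, one_mul, Nat.add_sub_cancel_left]

lemma meas_run
    (hcyl : ∀ (n : ℕ) (w : Fin n → Fin 2),
      ν {i | ∀ k : Fin n, i k = w k} = ((2:ℝ≥0∞)⁻¹) ^ n)
    (j k : ℕ) :
    ν {i | ∀ m < k, i (j + m) = 1} = 2⁻¹ ^ k := by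
  have hset : {i : ℕ → Fin 2 | ∀ m < k, i (j + m) = 1}
      = {i : ℕ → Fin 2 |
          (fun w : Fin (j + k) → Fin 2 => ∀ m (h : m < k), w ⟨j + m, by omega⟩ = 1)
          (fun t => i t)} := rfl
  have hm := meas_cyl hcyl (j + k)
    (fun w : Fin (j + k) → Fin 2 => ∀ m (h : m < k), w ⟨j + m, by omega⟩ = 1)
  rw [hset, hm, card_run]
  push_cast
  rw [pow_mul_inv_pow (Nat.le_add_right j k)]
  congr 1
  omega

lemma meas_blocks
    (hcyl : ∀ (n : ℕ) (w : Fin n → Fin 2),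
      ν {i | ∀ k : Fin n, i k = w k} = ((2:ℝ≥0∞)⁻¹) ^ n)
    (B k : ℕ) (hk : 0 < k) :
    ν {i | ∀ b < B, ∃ m, m < k ∧ i (b * k + m) ≠ 1}
      = (((2 ^ k - 1) ^ B : ℕ) : ℝ≥0∞) * 2⁻¹ ^ (B * k) := by
  have hset : {i : ℕ → Fin 2 | ∀ b < B, ∃ m, m < k ∧ i (b * k + m) ≠ 1}
      = {i : ℕ → Fin 2 |
          (fun w : Fin (B * k) → Fin 2 =>
            ∀ b (hb : b < B), ∃ m, ∃ hm : m < k, w ⟨b * k + m, blk_lt hb hm⟩ ≠ 1)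
          (fun t => i t)} := by
    ext i
    simp only [mem_setOf_eq]
    constructor
    · intro h b hb
      obtain ⟨m, hm, hne⟩ := h b hb
      exact ⟨m, hm, hne⟩
    · intro h b hb
      obtain ⟨m, hm, hne⟩ := h b hb
      exact ⟨m, hm, hne⟩
  haveI hdp : DecidablePred (fun w : Fin (B * k) → Fin 2 =>
      ∀ b (hb : b < B), ∃ m, ∃ hm : m < k, w ⟨b * k + m, blk_lt hb hm⟩ ≠ 1) := by
    intro w
    have : ∀ b (hb : b < B),
        Decidable (∃ m, ∃ hm : m < k, w ⟨b * k + m, blk_lt hb hm⟩ ≠ 1) := fun b hb =>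
      decidable_of_iff (∃ m : Fin k, w ⟨b * k + (m : ℕ), blk_lt hb m.isLt⟩ ≠ 1)
        ⟨fun ⟨m, h⟩ => ⟨m, m.isLt, h⟩, fun ⟨m, hm, h⟩ => ⟨⟨m, hm⟩, h⟩⟩
    exact @Nat.decidableBallLT B _ this
  have hm := meas_cyl hcyl (B * k)
    (fun w : Fin (B * k) → Fin 2 =>
      ∀ b (hb : b < B), ∃ m, ∃ hm : m < k, w ⟨b * k + m, blk_lt hb hm⟩ ≠ 1)
  rw [hset, hm, card_blocks B k hk]


lemma nat_core {x : ℕ} (hx : 1 ≤ x) : 2 * (x - 1) ^ x ≤ x ^ x := by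
  rcases eq_or_lt_of_le hx with h | h
  · simp [← h]
  have hx2 : 2 ≤ x := h
  have hxR : (0:ℝ) < x := by positivity
  have key : ((x:ℝ) - 1) ^ x * 2 ≤ (x:ℝ) ^ x := by
    have h1 : (1 - 1/(x:ℝ)) ≤ Real.exp (-(1/x)) := by
      have := Real.add_one_le_exp (-(1/(x:ℝ)))
      linarith
    have h1' : (0:ℝ) ≤ 1 - 1/x := by
      rw [sub_nonneg, div_le_one hxR]
      exact_mod_cast Nat.one_le_cast.mpr hx
    have h2 : (1 - 1/(x:ℝ)) ^ x ≤ Real.exp (-(1/x)) ^ x :=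
      pow_le_pow_left₀ h1' h1 x
    have h3 : Real.exp (-(1/(x:ℝ))) ^ x = Real.exp (-1) := by
      rw [← Real.exp_nat_mul]
      congr 1
      field_simp
    have h4 : Real.exp (-1) ≤ 1/2 := by
      rw [Real.exp_neg]
      have h2e : (2:ℝ) ≤ Real.exp 1 := by
        have := Real.add_one_le_exp (1:ℝ); linarith
      calc (Real.exp 1)⁻¹ ≤ 2⁻¹ := inv_anti₀ (by norm_num) h2e
        _ = 1/2 := by norm_num
    have h5 : (1 - 1/(x:ℝ)) = ((x:ℝ) - 1) / x := by field_simp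
    have h6 : (((x:ℝ) - 1) / x) ^ x ≤ 1/2 := by
      rw [← h5]; exact h2.trans (h3.le.trans h4)
    have h7 : (((x:ℝ) - 1) / x) ^ x = ((x:ℝ)-1)^x / (x:ℝ)^x := div_pow _ _ _
    rw [h7, div_le_div_iff₀ (by positivity) (by norm_num)] at h6
    linarith
  have : ((2 * (x-1)^x : ℕ) : ℝ) ≤ ((x^x : ℕ) : ℝ) := by
    push_cast [Nat.cast_sub hx]
    linarith
  exact_mod_cast this

lemma nat_N2 (x : ℕ) (hx : 1 ≤ x) :
    ∀ r B : ℕ, r * x ≤ B → 2 ^ r * (x - 1) ^ B ≤ x ^ B := by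
  intro r
  induction r with
  | zero =>
    intro B _
    simpa using Nat.pow_le_pow_left (by omega) B
  | succ r ih =>
    intro B hB
    rw [Nat.succ_mul] at hB
    have hxB : x ≤ B := by omega
    obtain ⟨D, rfl⟩ : ∃ D, B = D + x := ⟨B - x, by omega⟩
    have hB' : r * x ≤ D := by omega
    calc 2 ^ (r+1) * (x-1) ^ (D + x) = (2 ^ r * (x-1) ^ D) * (2 * (x-1) ^ x) := by ring
      _ ≤ x ^ D * x ^ x := Nat.mul_le_mul (ih _ hB') (nat_core hx)
      _ = x ^ (D + x) := (pow_add x D x).symm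

lemma pow4_le (q : ℕ) : (q/4 + 1)^4 ≤ 2^q :=
  calc (q/4 + 1)^4 ≤ (2^(q/4))^4 := Nat.pow_le_pow_left Nat.lt_two_pow_self 4
    _ = 2^(q/4 * 4) := (pow_mul 2 (q/4) 4).symm
    _ ≤ 2^q := Nat.pow_le_pow_right (by norm_num) (by omega)

lemma nat_growth {c r : ℕ} (hc : 1 ≤ c) (hr : 16 * c * c ≤ r) :
    r * r ≤ 2 ^ (r / c) := by
  have hc0 : 0 < c := hc
  set q := r / c with hq
  set a := q / 4 + 1 with ha
  have hrc : r < (q + 1) * c :=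
    (Nat.div_lt_iff_lt_mul hc0).1 (Nat.lt_succ_self _)
  have hq16 : 16 * c ≤ q := by
    rw [hq, Nat.le_div_iff_mul_le hc0]
    exact hr
  have hc4 : 4 * c ≤ a := by
    have h1 : (16 * c) / 4 ≤ q / 4 := Nat.div_le_div_right hq16
    omega
  have hq4 : q + 1 ≤ 4 * a := by omega
  have hA : a^4 ≤ 2^q := pow4_le q
  calc r * r ≤ ((q+1) * c) * ((q+1) * c) := Nat.mul_le_mul hrc.le hrc.le
    _ ≤ ((4*a) * c) * ((4*a) * c) :=
        Nat.mul_le_mul (Nat.mul_le_mul_right c hq4) (Nat.mul_le_mul_right c hq4)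
    _ = (4*c*a) * (4*c*a) := by ring
    _ ≤ (a*a) * (a*a) :=
        Nat.mul_le_mul (Nat.mul_le_mul_right a hc4) (Nat.mul_le_mul_right a hc4)
    _ = a^4 := by ring
    _ ≤ 2^q := hA

lemma tsum_pow_div (c : ℕ) (hc : 0 < c) :
    ∑' r : ℕ, (2⁻¹ : ℝ≥0∞) ^ (r / c) ≠ ∞ := by
  haveI : NeZero c := ⟨hc.ne'⟩
  have he : ∑' r : ℕ, (2⁻¹ : ℝ≥0∞) ^ (r / c)
      = ∑' p : ℕ × Fin c, (2⁻¹ : ℝ≥0∞) ^ p.1 :=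
    Equiv.tsum_eq (Nat.divModEquiv c) (fun p : ℕ × Fin c => (2⁻¹ : ℝ≥0∞) ^ p.1)
  rw [he, ENNReal.tsum_prod']
  simp only [tsum_fintype, Finset.sum_const, Finset.card_univ, Fintype.card_fin, nsmul_eq_mul]
  rw [ENNReal.tsum_mul_left, ENNReal.tsum_geometric]
  exact ENNReal.mul_ne_top (by simp) (by simp [ENNReal.sub_half])

lemma tsum_tail {a : ℕ → ℝ≥0∞} (N : ℕ) (h1 : ∀ r, a r ≤ 1)
    (h2 : ∀ r, N ≤ r → a r ≤ 2⁻¹ ^ r) : ∑' r, a r ≠ ∞ := by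
  have hle : ∀ r, a r ≤ (if r < N then 1 else 0) + 2⁻¹ ^ r := by
    intro r
    by_cases h : r < N
    · simp only [h, if_pos]
      exact le_add_right (h1 r)
    · simp only [h, if_neg, not_false_iff, zero_add]
      exact h2 r (by omega)
  have hsum : ∑' r, a r ≤ ∑' r, ((if r < N then (1:ℝ≥0∞) else 0) + 2⁻¹ ^ r) :=
    ENNReal.tsum_le_tsum hle
  rw [ENNReal.tsum_add] at hsum
  refine ne_top_of_le_ne_top ?_ hsum
  apply ENNReal.add_ne_top.mpr
  constructor
  · rw [tsum_eq_sum (s := Finset.range N) (fun b hb => by simp [Finset.mem_range.not.mp hb])]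
    exact (lt_of_le_of_lt (Finset.sum_le_card_nsmul _ _ 1 (fun x _ => by split <;> simp))
      (by simp [lt_top_iff_ne_top])).ne
  · rw [ENNReal.tsum_geometric]
    simp [ENNReal.sub_half]

lemma le_maxRun_iff {i : ℕ → Fin 2} {n K : ℕ} :
    K ≤ maxRun i n ↔ ∃ j, j + K ≤ n ∧ ∀ m < K, i (j + m) = 1 := by
  constructor
  · intro h
    obtain ⟨j, hj, hr⟩ := maxRun_spec i n
    exact ⟨j, by omega, fun m hm => hr m (by omega)⟩
  · rintro ⟨j, hj, hr⟩
    exact le_maxRun j hj hr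

lemma meas_upper
    (hcyl : ∀ (n : ℕ) (w : Fin n → Fin 2),
      ν {i | ∀ k : Fin n, i k = w k} = ((2:ℝ≥0∞)⁻¹) ^ n)
    (n K : ℕ) (hK : 0 < K) :
    ν {i | K ≤ maxRun i n} ≤ n * 2⁻¹ ^ K := by
  have hsub : {i : ℕ → Fin 2 | K ≤ maxRun i n}
      ⊆ ⋃ j ∈ Finset.range n, {i : ℕ → Fin 2 | ∀ m < K, i (j + m) = 1} := by
    intro i hi
    rw [mem_setOf_eq, le_maxRun_iff] at hi
    obtain ⟨j, hj, hr⟩ := hi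
    exact mem_iUnion₂.mpr ⟨j, Finset.mem_range.mpr (by omega), hr⟩
  calc ν {i | K ≤ maxRun i n} ≤ ν (⋃ j ∈ Finset.range n, {i : ℕ → Fin 2 | ∀ m < K, i (j + m) = 1}) :=
        measure_mono hsub
    _ ≤ ∑ j ∈ Finset.range n, ν {i : ℕ → Fin 2 | ∀ m < K, i (j + m) = 1} :=
        measure_biUnion_finset_le _ _
    _ = n * 2⁻¹ ^ K := by
        rw [Finset.sum_congr rfl fun j _ => meas_run hcyl j K, Finset.sum_const,
          Finset.card_range, nsmul_eq_mul]

lemma bc_upper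
    (hcyl : ∀ (n : ℕ) (w : Fin n → Fin 2),
      ν {i | ∀ k : Fin n, i k = w k} = ((2:ℝ≥0∞)⁻¹) ^ n)
    (c : ℕ) (hc : 0 < c) :
    ∀ᵐ i ∂ν, ∀ᶠ r : ℕ in atTop, maxRun i (2 ^ (r + 1)) < r + 1 + r / c := by
  have hbound : ∀ r : ℕ,
      ν {i | r + 1 + r / c ≤ maxRun i (2 ^ (r + 1))} ≤ 2⁻¹ ^ (r / c) := by
    intro r
    refine (meas_upper hcyl (2 ^ (r + 1)) (r + 1 + r / c)
      (Nat.add_pos_left (Nat.succ_pos r) _)).trans_eq ?_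
    push_cast
    rw [pow_mul_inv_pow (Nat.le_add_right (r + 1) (r / c))]
    congr 1
    simp
  have hsum : (∑' r : ℕ, ν {i | r + 1 + r / c ≤ maxRun i (2 ^ (r + 1))}) ≠ ∞ :=
    ne_top_of_le_ne_top (tsum_pow_div c hc) (ENNReal.tsum_le_tsum hbound)
  filter_upwards [ae_eventually_notMem hsum] with i hi
  filter_upwards [hi] with r hr
  simpa [not_le] using hr

lemma meas_lower
    (hcyl : ∀ (n : ℕ) (w : Fin n → Fin 2),
      ν {i | ∀ k : Fin n, i k = w k} = ((2:ℝ≥0∞)⁻¹) ^ n)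
    (n k : ℕ) (hk : 0 < k) :
    ν {i | maxRun i n < k}
      ≤ (((2 ^ k - 1) ^ (n / k) : ℕ) : ℝ≥0∞) * 2⁻¹ ^ (n / k * k) := by
  have hsub : {i : ℕ → Fin 2 | maxRun i n < k}
      ⊆ {i : ℕ → Fin 2 | ∀ b < n / k, ∃ m, m < k ∧ i (b * k + m) ≠ 1} := by
    intro i hi b hb
    rw [mem_setOf_eq, maxRun_lt_iff] at hi
    apply hi (b * k)
    have h1 : (b + 1) * k ≤ (n / k) * k := Nat.mul_le_mul_right k hb
    have h2 : (n / k) * k ≤ n := Nat.div_mul_le_self n k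
    calc b * k + k = (b + 1) * k := by ring
      _ ≤ n := h1.trans h2
  exact (measure_mono hsub).trans_eq (meas_blocks hcyl (n / k) k hk)

lemma bc_lower [IsProbabilityMeasure ν]
    (hcyl : ∀ (n : ℕ) (w : Fin n → Fin 2),
      ν {i | ∀ k : Fin n, i k = w k} = ((2:ℝ≥0∞)⁻¹) ^ n)
    (c : ℕ) (hc : 2 ≤ c) :
    ∀ᵐ i ∂ν, ∀ᶠ r : ℕ in atTop, r - r / c ≤ maxRun i (2 ^ r) := by
  have hbound : ∀ r : ℕ, 16 * c * c ≤ r →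
      ν {i | maxRun i (2 ^ r) < r - r / c} ≤ 2⁻¹ ^ r := by
    intro r hr
    have hc1 : 1 < c := hc
    have hr1 : 1 ≤ r := le_trans (by nlinarith) hr
    obtain ⟨s, hs⟩ : ∃ s, r / c = s := ⟨_, rfl⟩
    have hsr : s < r := hs ▸ Nat.div_lt_self (by omega) hc1
    have hgrow : r * r ≤ 2 ^ s := hs ▸ nat_growth (by omega) hr
    rw [hs]
    clear hs
    set k := r - s with hkdef
    have hk0 : 0 < k := by omega
    have hkr : k ≤ r := by omega
    obtain ⟨B, hBeq⟩ : ∃ B, 2 ^ r / k = B := ⟨_, rfl⟩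
    have hB : r * 2 ^ k ≤ B := by
      rw [← hBeq, Nat.le_div_iff_mul_le hk0]
      have h1 : r * k ≤ 2 ^ s :=
        le_trans (Nat.mul_le_mul_left r hkr) hgrow
      calc r * 2 ^ k * k = 2 ^ k * (r * k) := by ring
        _ ≤ 2 ^ k * 2 ^ s := Nat.mul_le_mul_left _ h1
        _ = 2 ^ r := by rw [← pow_add]; congr 1; omega
    have hrB : r ≤ B * k := by
      have h1 : r ≤ r * 2 ^ k := Nat.le_mul_of_pos_right r (Nat.pow_pos (n := k) (by omega))
      have h2 : B ≤ B * k := Nat.le_mul_of_pos_right B hk0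
      omega
    have hcount : (2 ^ k - 1) ^ B * 2 ^ r ≤ 2 ^ (B * k) := by
      have hn2 := nat_N2 (2 ^ k) Nat.one_le_two_pow r B hB
      calc (2 ^ k - 1) ^ B * 2 ^ r = 2 ^ r * (2 ^ k - 1) ^ B := mul_comm _ _
        _ ≤ (2 ^ k) ^ B := hn2
        _ = 2 ^ (B * k) := by rw [← pow_mul, mul_comm]
    have hcount' : (2 ^ k - 1) ^ B ≤ 2 ^ (B * k - r) := by
      have h2 : (2 : ℕ) ^ (B * k) = 2 ^ (B * k - r) * 2 ^ r := by
        rw [← pow_add]; congr 1; omega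
      rw [h2] at hcount
      exact Nat.le_of_mul_le_mul_right hcount (Nat.pow_pos (n := r) (by omega))
    have hstart := meas_lower hcyl (2 ^ r) k hk0
    rw [hBeq] at hstart
    calc ν {i | maxRun i (2 ^ r) < k}
        ≤ (((2 ^ k - 1) ^ B : ℕ) : ℝ≥0∞) * 2⁻¹ ^ (B * k) := hstart
      _ ≤ (2 : ℝ≥0∞) ^ (B * k - r) * 2⁻¹ ^ (B * k) := by
          apply mul_le_mul' ?_ le_rfl
          calc (((2 ^ k - 1) ^ B : ℕ) : ℝ≥0∞)
              ≤ ((2 ^ (B * k - r) : ℕ) : ℝ≥0∞) := by exact_mod_cast hcount'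
            _ = (2 : ℝ≥0∞) ^ (B * k - r) := by push_cast; ring
      _ = 2⁻¹ ^ (B * k - (B * k - r)) := pow_mul_inv_pow (by omega)
      _ = 2⁻¹ ^ r := by congr 1; omega
  have hone : ∀ r : ℕ, ν {i | maxRun i (2 ^ r) < r - r / c} ≤ 1 := fun r => prob_le_one
  have hsum : (∑' r : ℕ, ν {i | maxRun i (2 ^ r) < r - r / c}) ≠ ∞ :=
    tsum_tail (16 * c * c) hone (fun r hr => hbound r hr)
  filter_upwards [ae_eventually_notMem hsum] with i hi
  filter_upwards [hi] with r hr
  simpa [not_lt] using hr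

lemma final_ineq {Z L R C1 C2 ε : ℝ} (hR1' : 1 ≤ R) (hZ0 : 0 ≤ Z)
    (hL1 : R ≤ L) (hL2 : L ≤ R + 1) (hC1ge : 1 ≤ C1) (hC2ge : C2 = C1 + 1)
    (hRC1 : C1 ≤ R) (hεC1 : 2 < ε * C1) (hε : 0 < ε)
    (hZuR : Z * C1 ≤ R * C1 + R) (hZlR : R * C2 - R ≤ Z * C2) :
    |Z / L - 1| < ε := by
  have hLpos : (0:ℝ) < L := by linarith
  have hC1pos : (0:ℝ) < C1 := by linarith
  have hC2pos : (0:ℝ) < C2 := by linarith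
  rw [abs_sub_lt_iff]
  constructor
  · rw [sub_lt_iff_lt_add, div_lt_iff₀ hLpos]
    have key : ((ε + 1) * R - Z) * C1 ≥ R := by nlinarith
    have key2 : Z < (ε + 1) * R := by nlinarith
    nlinarith
  · have hgoal : 1 - ε < Z / L := by
      rw [lt_div_iff₀ hLpos]
      rcases le_or_gt 1 ε with h1e | h1e
      · have hmul : C2 - 1 ≤ R * (C2 - 1) := le_mul_of_one_le_left (by linarith) hR1'
        have h2 : R * (C2 - 1) = R * C2 - R := by ring
        have hZC2 : 1 ≤ Z * C2 := by linarith
        have hZpos : (0:ℝ) < Z := by nlinarith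
        nlinarith
      · have hεC2 : 2 < ε * C2 := by nlinarith
        have haux : (0:ℝ) ≤ (ε * C2 - 2) * R := mul_nonneg (by linarith) (by linarith)
        have key : (Z - (1 - ε) * (R + 1)) * C2 ≥ 1 := by nlinarith
        have key2 : (1 - ε) * (R + 1) < Z := by nlinarith
        have hmono : (1 - ε) * L ≤ (1 - ε) * (R + 1) :=
          mul_le_mul_of_nonneg_left hL2 (by linarith)
        linarith
    linarith


/-- Erdős–Révész law for the longest run: if `ν` is the Bernoulli(1/2,1/2) measure
on `{1,2}^ℕ`, then for `ν`-a.e. `𝚒`, `Z_n(𝚒)/log₂ n → 1` as `n → ∞`. -/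
theorem stmt_13 (ν : Measure (ℕ → Fin 2)) (hprob : IsProbabilityMeasure ν)
    (hcyl : ∀ (n : ℕ) (w : Fin n → Fin 2),
      ν {i | ∀ k : Fin n, i k = w k} = ((2:ℝ≥0∞)⁻¹) ^ n) :
    ∀ᵐ i ∂ν, Tendsto (fun n : ℕ => (maxRun i n : ℝ) / Real.logb 2 n)
      atTop (𝓝 1) := by
  haveI := hprob
  have hup : ∀ᵐ i ∂ν, ∀ c : ℕ,
      ∀ᶠ r : ℕ in atTop, maxRun i (2 ^ (r + 1)) < r + 1 + r / (c + 1) :=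
    ae_all_iff.mpr fun c => bc_upper hcyl (c + 1) (Nat.succ_pos c)
  have hlo : ∀ᵐ i ∂ν, ∀ c : ℕ,
      ∀ᶠ r : ℕ in atTop, r - r / (c + 2) ≤ maxRun i (2 ^ r) :=
    ae_all_iff.mpr fun c => bc_lower hcyl (c + 2) (by omega)
  filter_upwards [hup, hlo] with i hu hl
  rw [Metric.tendsto_atTop]
  intro ε hε
  obtain ⟨cc, hcc⟩ := exists_nat_gt (2 / ε)
  have hC1pos : (0:ℝ) < cc + 1 := by positivity
  have hεC1 : 2 < ε * ((cc:ℝ) + 1) := by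
    rw [div_lt_iff₀ hε] at hcc
    nlinarith
  obtain ⟨R1, hR1⟩ := eventually_atTop.mp (hu cc)
  obtain ⟨R2, hR2⟩ := eventually_atTop.mp (hl cc)
  refine ⟨2 ^ (max (max R1 R2) (cc + 1)), fun n hn => ?_⟩
  set M := max (max R1 R2) (cc + 1) with hM
  have hn1 : 1 ≤ n := le_trans Nat.one_le_two_pow hn
  set r := Nat.log 2 n with hrdef
  have hrM : M ≤ r := (Nat.le_log_iff_pow_le (by norm_num) (by omega)).mpr hn
  have hrcc : cc + 1 ≤ r := le_trans (Nat.le_max_right _ _) hrM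
  have hr1 : 1 ≤ r := by omega
  have hlow : 2 ^ r ≤ n := Nat.pow_log_le_self 2 (by omega)
  have hhigh : n < 2 ^ (r + 1) := Nat.lt_pow_succ_log_self (by norm_num) n
  -- natural number bounds on maxRun
  have hZu : maxRun i n ≤ r + r / (cc + 1) := by
    have h1 := hR1 r (le_trans (le_trans (Nat.le_max_left _ _) (Nat.le_max_left _ _)) hrM)
    have h2 : maxRun i n ≤ maxRun i (2 ^ (r + 1)) := maxRun_mono i hhigh.le
    obtain ⟨d, hd⟩ : ∃ d, r / (cc + 1) = d := ⟨_, rfl⟩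
    rw [hd] at h1 ⊢
    omega
  have hZl : r - r / (cc + 2) ≤ maxRun i n := by
    have h1 := hR2 r (le_trans (le_trans (Nat.le_max_right _ _) (Nat.le_max_left _ _)) hrM)
    have h2 : maxRun i (2 ^ r) ≤ maxRun i n := maxRun_mono i hlow
    obtain ⟨d, hd⟩ : ∃ d, r / (cc + 2) = d := ⟨_, rfl⟩
    rw [hd] at h1 ⊢
    omega
  -- move to the reals
  set R : ℝ := (r : ℝ) with hR
  set Z : ℝ := (maxRun i n : ℝ) with hZ
  set L : ℝ := Real.logb 2 n with hL
  have hR1' : (1:ℝ) ≤ R := by rw [hR]; exact_mod_cast hr1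
  have hZ0 : (0:ℝ) ≤ Z := by positivity
  have hnpos : (0:ℝ) < n := by exact_mod_cast hn1
  have hL1 : R ≤ L := by
    rw [hL, Real.le_logb_iff_rpow_le (by norm_num) hnpos, hR, Real.rpow_natCast]
    exact_mod_cast hlow
  have hL2 : L ≤ R + 1 := by
    rw [hL, Real.logb_le_iff_le_rpow (by norm_num) hnpos]
    have : R + 1 = ((r + 1 : ℕ) : ℝ) := by push_cast; ring
    rw [this, Real.rpow_natCast]
    exact_mod_cast hhigh.le
  have hLpos : (0:ℝ) < L := lt_of_lt_of_le (by linarith) hL1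
  set C1 : ℝ := (cc : ℝ) + 1 with hC1
  set C2 : ℝ := (cc : ℝ) + 2 with hC2
  have hC1ge : (1:ℝ) ≤ C1 := by rw [hC1]; have : (0:ℝ) ≤ cc := Nat.cast_nonneg cc; linarith
  have hC2ge : C2 = C1 + 1 := by rw [hC1, hC2]; ring
  have hRC1 : C1 ≤ R := by
    rw [hC1, hR]
    exact_mod_cast hrcc
  -- real bounds on Z
  have hZuR : Z * C1 ≤ R * C1 + R := by
    have h1 : Z ≤ R + ((r / (cc + 1) : ℕ) : ℝ) := by
      rw [hZ, hR]; exact_mod_cast hZu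
    have h2 : ((r / (cc + 1) : ℕ) : ℝ) ≤ R / C1 := by
      rw [hR, hC1]
      exact_mod_cast Nat.cast_div_le
    have h3 : Z ≤ R + R / C1 := by linarith
    have := mul_le_mul_of_nonneg_right h3 (le_of_lt (lt_of_lt_of_le zero_lt_one hC1ge))
    calc Z * C1 ≤ (R + R / C1) * C1 := this
      _ = R * C1 + R := by field_simp
  have hZlR : R * C2 - R ≤ Z * C2 := by
    have h2 : ((r / (cc + 2) : ℕ) : ℝ) ≤ R / C2 := by
      rw [hR, hC2]
      push_cast
      exact_mod_cast Nat.cast_div_le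
    have h1 : R - R / C2 ≤ Z := by
      have hd : ((r - r / (cc + 2) : ℕ) : ℝ) ≤ Z := by rw [hZ]; exact_mod_cast hZl
      have hd2 : (r / (cc + 2) : ℕ) ≤ r := Nat.div_le_self _ _
      rw [Nat.cast_sub hd2] at hd
      have : R - R / C2 ≤ R - ((r / (cc + 2) : ℕ) : ℝ) := by linarith
      rw [hR] at this ⊢
      linarith
    have hC2pos : (0:ℝ) < C2 := by rw [hC2ge]; linarith
    have := mul_le_mul_of_nonneg_right h1 hC2pos.le
    calc R * C2 - R = (R - R / C2) * C2 := by field_simp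
      _ ≤ Z * C2 := this
  -- conclude
  rw [Real.dist_eq]
  exact final_ineq hR1' hZ0 hL1 hL2 hC1ge hC2ge hRC1 hεC1 hε hZuR hZlR
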